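/- Invariance of the physical-limit subspace for the augmented damped harmonic oscillator: Fix m > 0, k, λ ∈ ℝ, and define F : ℝ⁴ → ℝ⁴ by F(q_a, q_b, π_a, π_b) = (π_a/m + (λ/2m)(q_a − q_b), −π_b/m − (λ/2m)(q_a − q_b), −(λ/2m)(π_a − π_b) − k q_a, (λ/2m)(π_a − π_b) + k q_b). Let z : [0,T] → ℝ⁴ be differentiable with z'(t) = F(z(t)) and z(0) in the physical-limit subspace PL = {(q_a, q_b, π_a, π_b) ∈ ℝ⁴ : q_a = q_b and π_a = −π_b}. Then z(t) ∈ PL for all t ∈ [0,T]. -/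

import Mathlib

noncomputable section

/-- The physical-limit subspace `PL = {(q_a, q_b, π_a, π_b) : q_a = q_b, π_a = −π_b}`. -/
def PLset : Set (ℝ × ℝ × ℝ × ℝ) := {z | z.1 = z.2.1 ∧ z.2.2.1 = -z.2.2.2}

/-- The Hamiltonian vector field of the augmented damped harmonic oscillator with mass `m`,
spring constant `k` and damping constant `lam`, in coordinates `(q_a, q_b, π_a, π_b)`. -/
def augF (m k lam : ℝ) (z : ℝ × ℝ × ℝ × ℝ) : ℝ × ℝ × ℝ × ℝ :=
  (z.2.2.1 / m + (lam / (2 * m)) * (z.1 - z.2.1),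
   -z.2.2.2 / m - (lam / (2 * m)) * (z.1 - z.2.1),
   -(lam / (2 * m)) * (z.2.2.1 - z.2.2.2) - k * z.1,
   (lam / (2 * m)) * (z.2.2.1 - z.2.2.2) + k * z.2.1)

open Set ContinuousLinearMap

/-- Projection onto the "constraint" coordinates `(q_a − q_b, π_a + π_b)`. -/
def projP : (ℝ × ℝ × ℝ × ℝ) →L[ℝ] ℝ × ℝ :=
  ((fst ℝ ℝ (ℝ × ℝ × ℝ)) -
      (fst ℝ ℝ (ℝ × ℝ)).comp (snd ℝ ℝ (ℝ × ℝ × ℝ))).prod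
    (((fst ℝ ℝ ℝ).comp ((snd ℝ ℝ (ℝ × ℝ)).comp (snd ℝ ℝ (ℝ × ℝ × ℝ)))) +
      ((snd ℝ ℝ ℝ).comp ((snd ℝ ℝ (ℝ × ℝ)).comp (snd ℝ ℝ (ℝ × ℝ × ℝ)))))

/-- The induced linear vector field on the constraint coordinates. -/
def conL (m k lam : ℝ) : (ℝ × ℝ) →L[ℝ] ℝ × ℝ :=
  ((lam / m) • fst ℝ ℝ ℝ + (1 / m) • snd ℝ ℝ ℝ).prod ((-k) • fst ℝ ℝ ℝ)

/-- **Invariance of the physical-limit subspace for the augmented damped harmonic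
oscillator.** Any solution of `z' = F(z)` starting in `PL` stays in `PL`. -/
theorem physical_limit_invariant
    (m k lam : ℝ) (hm : 0 < m) (T : ℝ) (hT : 0 ≤ T)
    (z : ℝ → ℝ × ℝ × ℝ × ℝ)
    (hz : ∀ t ∈ Set.Icc (0:ℝ) T,
      HasDerivWithinAt z (augF m k lam (z t)) (Set.Icc 0 T) t)
    (h0 : z 0 ∈ PLset) :
    ∀ t ∈ Set.Icc (0:ℝ) T, z t ∈ PLset := by
  have hm' : m ≠ 0 := ne_of_gt hm
  set w : ℝ → ℝ × ℝ := fun t => projP (z t) with hw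
  have key : ∀ x : ℝ × ℝ × ℝ × ℝ, projP (augF m k lam x) = conL m k lam (projP x) := by
    intro x
    simp only [projP, conL, augF, prod_apply, coe_sub', coe_comp', coe_fst', coe_snd',
      Pi.sub_apply, Function.comp_apply, add_apply, smul_apply, smul_eq_mul, Prod.mk.injEq]
    constructor <;> field_simp <;> ring
  have hw' : ∀ t ∈ Set.Icc (0:ℝ) T,
      HasDerivWithinAt w (conL m k lam (w t)) (Set.Icc 0 T) t := by
    intro t ht
    have := (projP.hasFDerivAt (x := z t)).comp_hasDerivWithinAt t (hz t ht)
    rw [key] at this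
    exact this
  have hwc : ContinuousOn w (Set.Icc 0 T) :=
    fun t ht => ((hw' t ht).continuousWithinAt)
  have hzero : ∀ t ∈ Set.Icc (0:ℝ) T, w t = 0 := by
    have huniq := ODE_solution_unique (v := fun _ x => conL m k lam x)
      (K := ‖conL m k lam‖₊) (f := w) (g := fun _ => (0 : ℝ × ℝ)) (a := 0) (b := T)
      (fun _ => (conL m k lam).lipschitz) hwc
      (fun t ht => (hw' t (Set.mem_Icc_of_Ico ht)).mono_of_mem_nhdsWithin
        (Icc_mem_nhdsGE_of_mem ht))
      continuousOn_const
      (fun t ht => by simpa using (hasDerivWithinAt_const t (Set.Ici t) (0 : ℝ × ℝ)))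
      (by simp [hw, projP, h0.1, h0.2, prod_apply])
    intro t ht
    exact huniq ht
  intro t ht
  have h := hzero t ht
  have h1 : (z t).1 - (z t).2.1 = 0 := congrArg Prod.fst h
  have h2 : (z t).2.2.1 + (z t).2.2.2 = 0 := congrArg Prod.snd h
  exact ⟨sub_eq_zero.mp h1, eq_neg_of_add_eq_zero_left h2⟩
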